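/- arXiv:cs/0607055 — 2 statements merged into one kernel-verified Lean document; each statement's English description precedes it below -/
import Mathlib

section
/- Let G be a connected chordal graph that is not complete, and let C be a maximal clique of G. Then the subgraph of G induced by the union of all maximal cliques other than C is connected. -/
namespace Chordal

variable {V : Type*} [Fintype V]

/-- A closed walk has a chord: an edge of `G` joining two support vertices that is
not an edge of the walk. -/
def HasChord (G : SimpleGraph V) {u : V} (c : G.Walk u u) : Prop :=
  ∃ v w, v ∈ c.support ∧ w ∈ c.support ∧ G.Adj v w ∧ s(v, w) ∉ c.edges

/-- A graph is chordal if every cycle of length at least 4 has a chord. -/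
def IsChordal (G : SimpleGraph V) : Prop :=
  ∀ ⦃u : V⦄ (c : G.Walk u u), c.IsCycle → 4 ≤ c.length → HasChord G c

/-- A maximal clique of `G`. -/
def IsMaxClique (G : SimpleGraph V) (s : Set V) : Prop :=
  G.IsClique s ∧ ∀ t : Set V, G.IsClique t → s ⊆ t → s = t

/-- A maximal clique of the induced subgraph `G(W)`. -/
def IsMaxCliqueOn (G : SimpleGraph V) (W s : Set V) : Prop :=
  s ⊆ W ∧ G.IsClique s ∧ ∀ t : Set V, t ⊆ W → G.IsClique t → s ⊆ t → s = t

/-- There is a walk from `u` to `w` staying inside `W` and avoiding `S`. -/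
def ReachWithin (G : SimpleGraph V) (W S : Set V) (u w : V) : Prop :=
  ∃ p : G.Walk u w, ∀ x ∈ p.support, x ∈ W ∧ x ∉ S

/-- `S` separates `u` from `w` in the induced subgraph `G(W)`. -/
def SeparatesOn (G : SimpleGraph V) (W S : Set V) (u w : V) : Prop :=
  u ∈ W ∧ w ∈ W ∧ u ∉ S ∧ w ∉ S ∧ u ≠ w ∧ ¬ ReachWithin G W S u w

/-- `S` is a minimal vertex separator of the induced subgraph `G(W)`:
for some pair `u, w` it is an inclusion-minimal set separating `u` from `w`. -/
def IsMinSeparatorOn (G : SimpleGraph V) (W S : Set V) : Prop :=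
  S ⊆ W ∧ ∃ u w, SeparatesOn G W S u w ∧ ∀ S' ⊂ S, ¬ SeparatesOn G W S' u w

/-- `S` is a minimal vertex separator of `G`. -/
def IsMinSeparator (G : SimpleGraph V) (S : Set V) : Prop :=
  IsMinSeparatorOn G Set.univ S

/-- `S` is inclusion-minimal among the minimal vertex separators of `G`. -/
def IsInclMinSeparator (G : SimpleGraph V) (S : Set V) : Prop :=
  IsMinSeparator G S ∧ ∀ S' : Set V, IsMinSeparator G S' → S' ⊆ S → S' = S

/-- `Γ` is a connected component of `G(V \ S)`. -/
def IsCompOutside (G : SimpleGraph V) (S Γ : Set V) : Prop :=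
  ∃ u, u ∉ S ∧ Γ = {w | ReachWithin G Set.univ S u w}

/-- A vertex is simplicial if its neighborhood is a clique. -/
def IsSimplicial (G : SimpleGraph V) (v : V) : Prop :=
  G.IsClique (G.neighborSet v)

/-- The simplicial component of a clique `C`: the simplicial vertices of `G` in `C`. -/
def Simp (G : SimpleGraph V) (C : Set V) : Set V :=
  {v ∈ C | IsSimplicial G v}

/-- The non-simplicial component of a clique `C`. -/
def Sep (G : SimpleGraph V) (C : Set V) : Set V :=
  C \ Simp G C

/-- `C` is a boundary clique (simply separated clique): a maximal clique such that
`Sep C = C ∩ C'` for some other maximal clique `C'`. -/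
def IsBoundaryClique (G : SimpleGraph V) (C : Set V) : Prop :=
  IsMaxClique G C ∧ ∃ C' : Set V, IsMaxClique G C' ∧ C' ≠ C ∧ Sep G C = C ∩ C'

/-- The induced subgraph on `W`, kept on the same vertex type. -/
def restrictS (G : SimpleGraph V) (W : Set V) : SimpleGraph V where
  Adj u v := G.Adj u v ∧ u ∈ W ∧ v ∈ W
  symm := ⟨fun u v ⟨h, hu, hv⟩ => ⟨h.symm, hv, hu⟩⟩
  loopless := ⟨fun u ⟨h, _, _⟩ => G.irrefl h⟩

/-- The vertex subset `A` induces a connected subgraph of `T`. -/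
def ConnOn {α : Type*} (T : SimpleGraph α) (A : Set α) : Prop :=
  A.Nonempty ∧ ∀ u ∈ A, ∀ v ∈ A, ∃ p : T.Walk u v, ∀ x ∈ p.support, x ∈ A

/-- The induced subgraph `G(W)` is complete. -/
def CompleteOn (G : SimpleGraph V) (W : Set V) : Prop :=
  ∀ u ∈ W, ∀ v ∈ W, u ≠ v → G.Adj u v

/-- A clique tree of `G`: a tree on the maximal cliques of `G` satisfying the
junction property. -/
def IsCliqueTree (G : SimpleGraph V) (T : SimpleGraph {s : Set V // IsMaxClique G s}) : Prop :=
  T.IsTree ∧ ∀ (C₁ C₂ : {s : Set V // IsMaxClique G s}) (p : T.Walk C₁ C₂), p.IsPath →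
    ∀ C₃ ∈ p.support, C₁.val ∩ C₂.val ⊆ C₃.val

/-- A leaf (endpoint) of a graph: a vertex with exactly one neighbor. -/
def IsLeaf {α : Type*} (T : SimpleGraph α) (a : α) : Prop :=
  ∃! b, T.Adj a b

/-- The union of the cliques preceding position `k` in a sequence. -/
def prefUnion {K : ℕ} (f : Fin K → Set V) (k : Fin K) : Set V :=
  {v | ∃ j, j < k ∧ v ∈ f j}

/-- A perfect sequence of the maximal cliques of the induced subgraph `G(W)`:
an enumeration of the maximal cliques of `G(W)` with the running intersection property. -/
def IsPerfectSeqOn (G : SimpleGraph V) (W : Set V) {K : ℕ} (f : Fin K → Set V) : Prop :=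
  Function.Injective f ∧ (∀ s : Set V, IsMaxCliqueOn G W s ↔ ∃ k, f k = s) ∧
  ∀ k : Fin K, 0 < (k : ℕ) →
    G.IsClique (prefUnion f k ∩ f k) ∧ ∃ k' : Fin K, k' < k ∧ prefUnion f k ∩ f k ⊆ f k'

/-- A perfect sequence of the maximal cliques of `G`. -/
def IsPerfectSeq (G : SimpleGraph V) {K : ℕ} (f : Fin K → Set V) : Prop :=
  Function.Injective f ∧ (∀ s : Set V, IsMaxClique G s ↔ ∃ k, f k = s) ∧
  ∀ k : Fin K, 0 < (k : ℕ) →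
    G.IsClique (prefUnion f k ∩ f k) ∧ ∃ k' : Fin K, k' < k ∧ prefUnion f k ∩ f k ⊆ f k'

/-- The closed neighborhood of a vertex. -/
def closedNbhd (G : SimpleGraph V) (v : V) : Set V :=
  insert v (G.neighborSet v)


lemma exists_maxClique_superset (G : SimpleGraph V) {t : Set V} (ht : G.IsClique t) :
    ∃ s, IsMaxClique G s ∧ t ⊆ s := by
  obtain ⟨s, hs, hmax⟩ := Set.Finite.exists_maximalFor id {s : Set V | G.IsClique s ∧ t ⊆ s}
    (Set.toFinite _) ⟨t, ht, subset_rfl⟩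
  exact ⟨s, ⟨hs.1, fun t' ht' hst' => le_antisymm hst' (hmax ⟨ht', hs.2.trans hst'⟩ hst')⟩, hs.2⟩

lemma private_mem (G : SimpleGraph V) (C : Set V) (hC : IsMaxClique G C) {v : V}
    (hv : v ∉ {v | ∃ s : Set V, IsMaxClique G s ∧ s ≠ C ∧ v ∈ s}) :
    ∀ y, G.Adj v y → y ∈ C := by
  have key : ∀ s, IsMaxClique G s → v ∈ s → s = C := fun s hs hvs =>
    by_contra fun hne => hv ⟨s, hs, hne, hvs⟩
  intro y hy
  have hpair : G.IsClique {v, y} := by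
    rw [SimpleGraph.isClique_pair]
    exact fun _ => hy
  obtain ⟨s, hs, hsub⟩ := exists_maxClique_superset G hpair
  have := key s hs (hsub (by simp))
  subst this
  exact hsub (by simp)

lemma reroute (G : SimpleGraph V) (C : Set V) (hC : IsMaxClique G C) :
    ∀ (n : ℕ) (u w : V) (p : G.Walk u w), p.length ≤ n →
      u ∈ {v | ∃ s : Set V, IsMaxClique G s ∧ s ≠ C ∧ v ∈ s} →
      w ∈ {v | ∃ s : Set V, IsMaxClique G s ∧ s ≠ C ∧ v ∈ s} →
      ∃ q : G.Walk u w, ∀ x ∈ q.support,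
        x ∈ {v | ∃ s : Set V, IsMaxClique G s ∧ s ≠ C ∧ v ∈ s} := by
  intro n
  induction n with
  | zero =>
    intro u w p hp hu hw
    cases p with
    | nil => exact ⟨.nil, by simpa using hu⟩
    | cons h p' => simp [SimpleGraph.Walk.length_cons] at hp
  | succ n ih =>
    intro u w p hp hu hw
    cases p with
    | nil => exact ⟨.nil, by simpa using hu⟩
    | @cons _ a _ h p' =>
      by_cases ha : a ∈ {v | ∃ s : Set V, IsMaxClique G s ∧ s ≠ C ∧ v ∈ s}
      · obtain ⟨q', hq'⟩ := ih a w p'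
          (by simp [SimpleGraph.Walk.length_cons] at hp; omega) ha hw
        refine ⟨.cons h q', ?_⟩
        intro x hx
        rw [SimpleGraph.Walk.support_cons, List.mem_cons] at hx
        rcases hx with rfl | hx
        · exact hu
        · exact hq' x hx
      · have hpriv := private_mem G C hC ha
        have huC : u ∈ C := hpriv u h.symm
        cases p' with
        | nil => exact absurd hw ha
        | @cons _ b _ h' p'' =>
          have hbC : b ∈ C := hpriv b h'
          simp only [SimpleGraph.Walk.length_cons] at hp
          by_cases hub : u = b
          · subst hub
            exact ih u w p'' (by omega) hu hw
          · have hadj : G.Adj u b := hC.1 huC hbC hub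
            exact ih u w (.cons hadj p'') (by simp [SimpleGraph.Walk.length_cons]; omega) hu hw

theorem connOn_union_of_other_maxcliques {V : Type*} [Fintype V]
    (G : SimpleGraph V) (hconn : G.Connected) (hch : IsChordal G)
    (hnc : ¬ CompleteOn G Set.univ) (C : Set V) (hC : IsMaxClique G C) :
    ConnOn G {v | ∃ s : Set V, IsMaxClique G s ∧ s ≠ C ∧ v ∈ s} := by
  constructor
  · have hCne : C ≠ Set.univ := by
      intro h
      apply hnc
      intro u _ v _ huv
      exact hC.1 (h ▸ Set.mem_univ u) (h ▸ Set.mem_univ v) huv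
    obtain ⟨v, hv⟩ := Set.ne_univ_iff_exists_notMem C |>.mp hCne
    have hsingle : G.IsClique {v} := by simp
    obtain ⟨s, hs, hsub⟩ := exists_maxClique_superset G hsingle
    refine ⟨v, s, hs, ?_, hsub (by simp)⟩
    rintro rfl
    exact hv (hsub (by simp))
  · intro u hu w hw
    obtain ⟨p⟩ := hconn.preconnected u w
    exact reroute G C hC p.length u w p le_rfl hu hw

end Chordal
end

section
/- Let G be a connected chordal graph and let S_1 ≠ S_2 be two minimal vertex separators of G. Then the set of maximal cliques containing S_1 is different from the set of maximal cliques containing S_2. -/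
namespace Chordal

variable {V : Type*} [Fintype V]

section Aux

set_option linter.unusedSectionVars false
set_option linter.unusedVariables false


open SimpleGraph

variable {G : SimpleGraph V}

lemma adj_of_length_one {u v : V} (p : G.Walk u v) (h : p.length = 1) : G.Adj u v := by
  cases p with
  | nil => simp at h
  | cons h' q =>
    cases q with
    | nil => exact h'
    | cons h'' q' => simp [Walk.length_cons] at h

lemma path_edge_ends {u v : V} {p : G.Walk u v} (hp : p.IsPath)
    (he : s(u, v) ∈ p.edges) : p.length = 1 := by
  cases p with
  | cons h q =>
    rename_i b
    rw [Walk.edges_cons, List.mem_cons] at he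
    rw [Walk.cons_isPath_iff] at hp
    rcases he with he | he
    · rw [Sym2.eq_iff] at he
      rcases he with ⟨-, hvb⟩ | ⟨hub, -⟩
      · subst hvb
        have : q = Walk.nil := Walk.isPath_iff_eq_nil.mp hp.1
        subst this
        simp
      · exact absurd hub h.ne
    · exact absurd (q.fst_mem_support_of_mem_edges he) hp.2
  | nil => simp at he

/-- Shortcut lemma: a chord of a walk yields a strictly shorter walk on a
sub-support. -/
lemma shortcut {s t : V} (p : G.Walk s t) :
    ∀ v w, v ∈ p.support → w ∈ p.support → G.Adj v w → s(v, w) ∉ p.edges →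
    ∃ q : G.Walk s t, (∀ x ∈ q.support, x ∈ p.support) ∧ q.length < p.length := by
  classical
  induction p with
  | nil =>
    intro v w hv hw hadj _
    simp only [Walk.support_nil, List.mem_singleton] at hv hw
    subst hv; subst hw
    exact absurd hadj G.irrefl
  | @cons a b c h q ih =>
    intro v w hv hw hadj hne
    rw [Walk.support_cons, List.mem_cons] at hv hw
    have mkshort : ∀ (w' : V), w' ∈ q.support → G.Adj a w' → s(a, w') ∉ (Walk.cons h q).edges →
        ∃ r : G.Walk a c, (∀ x ∈ r.support, x ∈ (Walk.cons h q).support) ∧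
          r.length < (Walk.cons h q).length := by
      intro w' hw' hadj' hne'
      have hbw : b ≠ w' := by
        rintro rfl
        exact hne' (by rw [Walk.edges_cons]; exact List.mem_cons_self)
      refine ⟨Walk.cons hadj' (q.dropUntil w' hw'), ?_, ?_⟩
      · intro x hx
        rw [Walk.support_cons, List.mem_cons] at hx
        rw [Walk.support_cons, List.mem_cons]
        rcases hx with rfl | hx
        · exact Or.inl rfl
        · exact Or.inr (q.support_dropUntil_subset hw' hx)
      · rw [Walk.length_cons, Walk.length_cons]
        have hsplit : (q.takeUntil w' hw').length + (q.dropUntil w' hw').length = q.length := by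
          rw [← Walk.length_append, Walk.take_spec]
        have : (q.takeUntil w' hw').length ≠ 0 := by
          intro h0
          exact hbw (Walk.eq_of_length_eq_zero h0)
        omega
    rcases hv with rfl | hv
    · rcases hw with rfl | hw
      · exact absurd hadj G.irrefl
      · exact mkshort w hw hadj hne
    · rcases hw with rfl | hw
      · have hne' : s(w, v) ∉ (Walk.cons h q).edges := by rwa [Sym2.eq_swap]
        exact mkshort v hv hadj.symm hne'
      · have hne2 : s(v, w) ∉ q.edges := fun hmem =>
          hne (by rw [Walk.edges_cons]; exact List.mem_cons_of_mem _ hmem)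
        obtain ⟨r, hr1, hr2⟩ := ih v w hv hw hadj hne2
        refine ⟨Walk.cons h r, ?_, ?_⟩
        · intro x hx
          rw [Walk.support_cons, List.mem_cons] at hx
          rw [Walk.support_cons, List.mem_cons]
          rcases hx with rfl | hx
          · exact Or.inl rfl
          · exact Or.inr (hr1 x hx)
        · rw [Walk.length_cons, Walk.length_cons]; omega

/-- Gluing two internally disjoint paths into a cycle. -/
lemma append_isCycle {a b : V} {P : G.Walk a b} {Q : G.Walk b a}
    (hP : P.IsPath) (hQ : Q.IsPath) (hab : a ≠ b)
    (hlen : 3 ≤ P.length + Q.length)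
    (hint : ∀ x, x ∈ P.support → x ∈ Q.support → x = a ∨ x = b) :
    (P.append Q).IsCycle := by
  rw [Walk.isCycle_def]
  refine ⟨?_, ?_, ?_⟩
  · rw [Walk.isTrail_def, Walk.edges_append, List.nodup_append]
    refine ⟨hP.edges_nodup, hQ.edges_nodup, ?_⟩
    intro e heP e' heQ hee
    subst hee
    induction e with
    | h x y =>
      have hx := hint x (P.fst_mem_support_of_mem_edges heP) (Q.fst_mem_support_of_mem_edges heQ)
      have hy := hint y (P.snd_mem_support_of_mem_edges heP) (Q.snd_mem_support_of_mem_edges heQ)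
      have hxy : x ≠ y := (P.adj_of_mem_edges heP).ne
      have hlp : P.length = 1 ∧ Q.length = 1 := by
        rcases hx with rfl | rfl
        · rcases hy with rfl | rfl
          · exact absurd rfl hxy
          · exact ⟨path_edge_ends hP heP, path_edge_ends hQ (by rwa [Sym2.eq_swap] at heQ)⟩
        · rcases hy with rfl | rfl
          · exact ⟨path_edge_ends hP (by rwa [Sym2.eq_swap] at heP),
              path_edge_ends hQ (by rwa [Sym2.eq_swap, Sym2.eq_swap] at heQ)⟩
          · exact absurd rfl hxy
      omega
  · intro hnil
    have : (P.append Q).length = 0 := by rw [hnil]; rfl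
    rw [Walk.length_append] at this
    omega
  · rw [Walk.support_append]
    rw [P.support_eq_cons, List.cons_append, List.tail_cons]
    rw [List.nodup_append]
    have hPn := hP.support_nodup
    have hQn := hQ.support_nodup
    rw [P.support_eq_cons, List.nodup_cons] at hPn
    rw [Q.support_eq_cons, List.nodup_cons] at hQn
    refine ⟨hPn.2, hQn.2, ?_⟩
    intro x hxP y hxQ hxy
    subst hxy
    have h1 : x ∈ P.support := by rw [P.support_eq_cons]; exact List.mem_cons_of_mem _ hxP
    have h2 : x ∈ Q.support := by rw [Q.support_eq_cons]; exact List.mem_cons_of_mem _ hxQ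
    rcases hint x h1 h2 with rfl | rfl
    · exact hPn.1 hxP
    · exact hQn.1 hxQ


/-- A walk is chordless if every edge of `G` between support vertices is a walk edge. -/
def Chordless {a b : V} (p : G.Walk a b) : Prop :=
  ∀ v w, v ∈ p.support → w ∈ p.support → G.Adj v w → s(v, w) ∈ p.edges

lemma takeUntil_dropUntil_support [DecidableEq V] {a b w : V} {p : G.Walk a b}
    (hp : p.IsPath) (hw : w ∈ p.support) :
    ∀ x, x ∈ (p.takeUntil w hw).support → x ∈ (p.dropUntil w hw).support → x = w := by
  intro x hx1 hx2
  have hnd := hp.support_nodup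
  rw [← p.take_spec hw, Walk.support_append, List.nodup_append] at hnd
  rw [(p.dropUntil w hw).support_eq_cons, List.mem_cons] at hx2
  rcases hx2 with rfl | hx2
  · rfl
  · exact absurd hx2 (fun h => hnd.2.2 x hx1 x h rfl)

lemma chordless_takeUntil [DecidableEq V] {a b w : V} {p : G.Walk a b} (hp : p.IsPath)
    (hcl : Chordless p) (hw : w ∈ p.support) :
    Chordless (p.takeUntil w hw) := by
  intro x y hx hy hadj
  have hme := hcl x y (p.support_takeUntil_subset hw hx) (p.support_takeUntil_subset hw hy) hadj
  have hsplit : p.edges = (p.takeUntil w hw).edges ++ (p.dropUntil w hw).edges := by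
    conv_lhs => rw [← p.take_spec hw]
    rw [Walk.edges_append]
  rw [hsplit, List.mem_append] at hme
  rcases hme with hme | hme
  · exact hme
  · exfalso
    have hx' := takeUntil_dropUntil_support hp hw x hx
      ((p.dropUntil w hw).fst_mem_support_of_mem_edges hme)
    have hy' := takeUntil_dropUntil_support hp hw y hy
      ((p.dropUntil w hw).snd_mem_support_of_mem_edges hme)
    exact hadj.ne (hx'.trans hy'.symm)

lemma getVert_append_one {a b c : V} (p : G.Walk a b) (q : G.Walk b c)
    (h : 1 ≤ p.length) : (p.append q).getVert 1 = p.getVert 1 := by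
  rw [Walk.getVert_append]
  rcases Nat.lt_or_ge 1 p.length with h' | h'
  · rw [if_pos h']
  · have h1 : p.length = 1 := le_antisymm h' h
    rw [if_neg (by omega), h1]
    simp [Walk.getVert_zero, ← h1, Walk.getVert_length]

/-- Key descent lemma: if `t` is adjacent to both ends of a chordless path of
length at least 2 and not on the path, then `t` is adjacent to the second
vertex of the path. -/
lemma chord_desc [DecidableEq V] (hch : IsChordal G) :
    ∀ n : ℕ, ∀ {x s : V} (P : G.Walk x s) (t : V), P.length = n →
    P.IsPath → Chordless P → 2 ≤ P.length →
    G.Adj t x → G.Adj t s → t ∉ P.support →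
    G.Adj t (P.getVert 1) := by
  intro n
  induction n using Nat.strong_induction_on with
  | _ n ih =>
  intro x s P t hn hP hcl hlen htx hts htP
  have hxs : x ≠ s := by
    rintro rfl
    rw [Walk.isPath_iff_eq_nil] at hP
    subst hP
    simp at hlen
  set Q : G.Walk s x := Walk.cons hts.symm (Walk.cons htx Walk.nil) with hQdef
  have hQsup : Q.support = [s, t, x] := by simp [hQdef]
  have hQ : Q.IsPath := by
    rw [Walk.isPath_def, hQsup]
    have h1 : s ≠ t := hts.ne'
    have h2 : t ≠ x := htx.ne
    have h3 : s ≠ x := hxs.symm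
    simp [h1, h2, h3]
  have hintQ : ∀ y, y ∈ P.support → y ∈ Q.support → y = x ∨ y = s := by
    intro y hyP hyQ
    rw [hQsup] at hyQ
    simp only [List.mem_cons, List.not_mem_nil, or_false, List.mem_singleton] at hyQ
    rcases hyQ with rfl | rfl | rfl
    · exact Or.inr rfl
    · exact absurd hyP htP
    · exact Or.inl rfl
  have hcyc : (P.append Q).IsCycle :=
    append_isCycle hP hQ hxs (by simp [hQdef]; omega) hintQ
  have hclen : 4 ≤ (P.append Q).length := by
    rw [Walk.length_append]
    simp [hQdef]
    omega
  obtain ⟨v, w, hv, hw, hadj, hne⟩ := hch (P.append Q) hcyc hclen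
  rw [Walk.mem_support_append_iff] at hv hw
  have hedges : (P.append Q).edges = P.edges ++ [s(s, t), s(t, x)] := by
    rw [Walk.edges_append]
    simp [hQdef]
  -- a vertex of the cycle support is either on P or equals t
  have hvtx : ∀ y, y ∈ P.support ∨ y ∈ Q.support → y ∈ P.support ∨ y = t := by
    intro y hy
    rcases hy with hy | hy
    · exact Or.inl hy
    · rw [hQsup] at hy
      simp only [List.mem_cons, List.not_mem_nil, or_false, List.mem_singleton] at hy
      rcases hy with rfl | rfl | rfl
      · exact Or.inl P.end_mem_support
      · exact Or.inr rfl
      · exact Or.inl P.start_mem_support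
  -- both chord ends on P is impossible
  have hnotboth : ¬ (v ∈ P.support ∧ w ∈ P.support) := by
    rintro ⟨hv', hw'⟩
    exact hne (by rw [hedges, List.mem_append]; exact Or.inl (hcl v w hv' hw' hadj))
  -- extract the chord : t to some w' on P, w' ≠ x, w' ≠ s
  have hchord : ∃ w', w' ∈ P.support ∧ G.Adj t w' ∧ s(t, w') ∉ (P.append Q).edges := by
    rcases hvtx v hv with hv' | hvt
    · rcases hvtx w hw with hw' | hwt
      · exact absurd ⟨hv', hw'⟩ hnotboth
      · subst hwt
        exact ⟨v, hv', hadj.symm, by rwa [Sym2.eq_swap]⟩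
    · subst hvt
      rcases hvtx w hw with hw' | hwt
      · exact ⟨w, hw', hadj, hne⟩
      · exact absurd hwt.symm hadj.ne
  obtain ⟨w', hw'P, htw', hne'⟩ := hchord
  have hwx : w' ≠ x := by
    rintro rfl
    exact hne' (by rw [hedges, List.mem_append]; right; simp)
  have hws : w' ≠ s := by
    rintro rfl
    refine hne' (by rw [hedges, List.mem_append]; right; simp [Sym2.eq_swap])
  -- the prefix of P up to w'
  set A := P.takeUntil w' hw'P with hAdef
  have hApath : A.IsPath := hP.takeUntil hw'P
  have hAcl : Chordless A := chordless_takeUntil hP hcl hw'P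
  have hAlen1 : 1 ≤ A.length := by
    rcases Nat.eq_zero_or_pos A.length with h0 | h0
    · exact absurd (Walk.eq_of_length_eq_zero h0).symm hwx
    · omega
  have hsplit : A.length + (P.dropUntil w' hw'P).length = P.length := by
    rw [← Walk.length_append, Walk.take_spec]
  have hdrop1 : 1 ≤ (P.dropUntil w' hw'P).length := by
    rcases Nat.eq_zero_or_pos (P.dropUntil w' hw'P).length with h0 | h0
    · exact absurd (Walk.eq_of_length_eq_zero h0) hws
    · omega
  have hgv : P.getVert 1 = A.getVert 1 := by
    conv_lhs => rw [← P.take_spec hw'P]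
    rw [getVert_append_one _ _ hAlen1]
  rcases Nat.lt_or_ge A.length 2 with hA2 | hA2
  · -- A.length = 1 : the second vertex of P is w' itself
    have hA1 : A.length = 1 := by omega
    rw [hgv, ← hA1, Walk.getVert_length]
    exact htw'
  · -- recurse on A
    rw [hgv]
    refine ih A.length (by omega) A t rfl hApath hAcl hA2 htx htw' ?_
    intro hmem
    exact htP (P.support_takeUntil_subset hw'P hmem)


lemma exists_adj_all [DecidableEq V] (hch : IsChordal G) (S Γ : Set V)
    (hSclique : G.IsClique S)
    (hdisj : ∀ a ∈ Γ, a ∉ S)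
    (hΓne : Γ.Nonempty)
    (hclosed : ∀ a ∈ Γ, ∀ b, G.Adj a b → b ∉ S → b ∈ Γ)
    (hconnΓ : ∀ a ∈ Γ, ∀ b ∈ Γ, ∃ p : G.Walk a b, ∀ x ∈ p.support, x ∈ Γ)
    (hfull : ∀ s ∈ S, ∃ a ∈ Γ, G.Adj a s) :
    ∃ x ∈ Γ, ∀ s ∈ S, G.Adj x s := by
  by_contra hcon
  push_neg at hcon
  have hwalk : ∀ x ∈ Γ, ∀ s ∈ S, ∃ p : G.Walk x s, ∀ v ∈ p.support, v = s ∨ v ∈ Γ := by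
    intro x hx s hs
    obtain ⟨a, ha, hadj⟩ := hfull s hs
    obtain ⟨q, hq⟩ := hconnΓ x hx a ha
    refine ⟨q.append (Walk.cons hadj Walk.nil), ?_⟩
    intro v hv
    rw [Walk.mem_support_append_iff] at hv
    rcases hv with h | h
    · exact Or.inr (hq v h)
    · simp only [Walk.support_cons, Walk.support_nil, List.mem_cons, List.mem_singleton,
        List.not_mem_nil, or_false] at h
      rcases h with rfl | rfl
      · exact Or.inr ha
      · exact Or.inl rfl
  set m : V → ℕ := fun x => (S \ {y | G.Adj x y}).ncard with hm
  set CV := Fintype.card V with hCV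
  set N : Set ℕ := {n | ∃ x s, x ∈ Γ ∧ s ∈ S ∧ ¬ G.Adj x s ∧ ∃ p : G.Walk x s,
      (∀ v ∈ p.support, v = s ∨ v ∈ Γ) ∧ p.IsPath ∧ n = m x * (CV + 1) + p.length} with hN
  have hmem : ∀ x ∈ Γ, ∀ s ∈ S, ¬ G.Adj x s → ∀ p : G.Walk x s,
      (∀ v ∈ p.support, v = s ∨ v ∈ Γ) → m x * (CV + 1) + p.bypass.length ∈ N := by
    intro x hx s hs hna p hp
    exact ⟨x, s, hx, hs, hna, p.bypass, fun v hv => hp v (p.support_bypass_subset hv),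
      p.bypass_isPath, rfl⟩
  have hNne : N.Nonempty := by
    obtain ⟨x₀, hx₀⟩ := hΓne
    obtain ⟨s₀, hs₀, hna₀⟩ := hcon x₀ hx₀
    obtain ⟨p₀, hp₀⟩ := hwalk x₀ hx₀ s₀ hs₀
    exact ⟨_, hmem x₀ hx₀ s₀ hs₀ hna₀ p₀ hp₀⟩
  obtain ⟨x, s, hx, hs, hnadj, P, hPcond, hPpath, hval⟩ := Nat.sInf_mem hNne
  -- minimality of P among walks from x to s within Γ
  have hminP : ∀ q : G.Walk x s, (∀ v ∈ q.support, v = s ∨ v ∈ Γ) → P.length ≤ q.length := by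
    intro q hq
    have h1 := Nat.sInf_le (hmem x hx s hs hnadj q hq)
    have h2 := q.length_bypass_le
    omega
  have hxns : x ≠ s := fun h => hdisj x hx (h ▸ hs)
  have hPlen2 : 2 ≤ P.length := by
    rcases Nat.lt_or_ge P.length 2 with h | h
    · interval_cases h' : P.length
      · exact absurd (Walk.eq_of_length_eq_zero h') hxns
      · exact absurd (adj_of_length_one P h') hnadj
    · exact h
  -- P is chordless
  have hPcl : Chordless P := by
    intro v w hv hw hadj
    by_contra hne
    obtain ⟨q, hq1, hq2⟩ := shortcut P v w hv hw hadj hne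
    exact absurd (hminP q (fun y hy => hPcond y (hq1 y hy))) (by omega)
  -- the second vertex
  set p1 := P.getVert 1 with hp1
  have hp1mem : p1 ∈ P.support := by
    rw [Walk.mem_support_iff_exists_getVert]
    exact ⟨1, rfl, by omega⟩
  have hadj_xp1 : G.Adj x p1 := by
    have := P.adj_getVert_succ (i := 0) (by omega)
    rwa [Walk.getVert_zero] at this
  have hp1Γ : p1 ∈ Γ := by
    rcases hPcond p1 hp1mem with h | h
    · exact absurd (h ▸ hadj_xp1) hnadj
    · exact h
  -- claim : every common neighbour of x in S is a neighbour of p1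
  have hclaim : ∀ t ∈ S, G.Adj x t → G.Adj p1 t := by
    intro t ht hxt
    have hts : t ≠ s := fun h => hnadj (h ▸ hxt)
    have htnP : t ∉ P.support := by
      intro hmem'
      rcases hPcond t hmem' with h | h
      · exact hts h
      · exact hdisj t h ht
    exact (chord_desc hch P.length P t rfl hPpath hPcl hPlen2 hxt.symm
      (hSclique ht hs hts) htnP).symm
  have hsub : (S \ {y | G.Adj p1 y}) ⊆ (S \ {y | G.Adj x y}) := by
    rintro t ⟨ht, htna⟩
    exact ⟨ht, fun hxt => htna (hclaim t ht hxt)⟩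
  -- the walk from p1 to s along P
  have hTlen : ∀ h1m : p1 ∈ P.support, (P.dropUntil p1 h1m).length + 1 ≤ P.length := by
    intro h1m
    have hsplit : (P.takeUntil p1 h1m).length + (P.dropUntil p1 h1m).length = P.length := by
      rw [← Walk.length_append, Walk.take_spec]
    have : (P.takeUntil p1 h1m).length ≠ 0 := fun h0 =>
      hadj_xp1.ne (Walk.eq_of_length_eq_zero h0)
    omega
  have hTcond : ∀ v ∈ (P.dropUntil p1 hp1mem).support, v = s ∨ v ∈ Γ := fun v hv =>
    hPcond v (P.support_dropUntil_subset hp1mem hv)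
  rcases Nat.lt_or_ge 2 P.length with hP3 | hP2
  · -- case : length ≥ 3, p1 is not adjacent to s, descend in distance
    have hnadj1 : ¬ G.Adj p1 s := by
      intro hadj1
      have := hminP (Walk.cons hadj_xp1 (Walk.cons hadj1 Walk.nil)) ?_
      · simp [Walk.length_cons] at this; omega
      · intro v hv
        simp only [Walk.support_cons, Walk.support_nil, List.mem_cons, List.mem_singleton,
          List.not_mem_nil, or_false] at hv
        rcases hv with rfl | rfl | rfl
        · exact Or.inr hx
        · exact Or.inr hp1Γ
        · exact Or.inl rfl
    have hball := Nat.sInf_le (hmem p1 hp1Γ s hs hnadj1 (P.dropUntil p1 hp1mem) hTcond)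
    have hmle : m p1 ≤ m x := Set.ncard_le_ncard hsub (Set.toFinite _)
    have hmul : m p1 * (CV + 1) ≤ m x * (CV + 1) := Nat.mul_le_mul_right _ hmle
    have hbl := (P.dropUntil p1 hp1mem).length_bypass_le
    have hTl := hTlen hp1mem
    omega
  · -- case : length = 2, p1 is adjacent to s, the count drops
    have hP2' : P.length = 2 := by omega
    have hadj1 : G.Adj p1 s := by
      have hTl := hTlen hp1mem
      have hT1 : (P.dropUntil p1 hp1mem).length = 1 := by
        rcases Nat.eq_zero_or_pos (P.dropUntil p1 hp1mem).length with h0 | h0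
        · exact absurd (Walk.eq_of_length_eq_zero h0) (fun h => hdisj p1 hp1Γ (h ▸ hs))
        · omega
      exact adj_of_length_one _ hT1
    have hssub : (S \ {y | G.Adj p1 y}) ⊂ (S \ {y | G.Adj x y}) := by
      refine ⟨hsub, fun hsup => ?_⟩
      have : s ∈ (S \ {y | G.Adj p1 y}) := hsup ⟨hs, hnadj⟩
      exact this.2 hadj1
    have hmlt : m p1 < m x := Set.ncard_lt_ncard hssub (Set.toFinite _)
    obtain ⟨s', hs', hna'⟩ := hcon p1 hp1Γ
    obtain ⟨q, hq⟩ := hwalk p1 hp1Γ s' hs'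
    have hball := Nat.sInf_le (hmem p1 hp1Γ s' hs' hna' q hq)
    have hqlen : q.bypass.length < CV := q.bypass_isPath.length_lt
    have hmul : (m p1 + 1) * (CV + 1) ≤ m x * (CV + 1) := Nat.mul_le_mul_right _ (by omega)
    rw [Nat.succ_mul] at hmul
    omega


lemma sep_clique [DecidableEq V] (hch : IsChordal G) (S Γ₁ Γ₂ : Set V)
    (hdisj1 : ∀ a ∈ Γ₁, a ∉ S) (hdisj2 : ∀ a ∈ Γ₂, a ∉ S)
    (hdisj12 : ∀ a ∈ Γ₁, a ∉ Γ₂)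
    (hclosed1 : ∀ a ∈ Γ₁, ∀ b, G.Adj a b → b ∉ S → b ∈ Γ₁)
    (hconn1 : ∀ a ∈ Γ₁, ∀ b ∈ Γ₁, ∃ p : G.Walk a b, ∀ x ∈ p.support, x ∈ Γ₁)
    (hconn2 : ∀ a ∈ Γ₂, ∀ b ∈ Γ₂, ∃ p : G.Walk a b, ∀ x ∈ p.support, x ∈ Γ₂)
    (hfull1 : ∀ s ∈ S, ∃ a ∈ Γ₁, G.Adj a s)
    (hfull2 : ∀ s ∈ S, ∃ a ∈ Γ₂, G.Adj a s) :
    G.IsClique S := by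
  intro s hs t ht hst
  by_contra hnadj
  -- minimal connecting paths through each side
  have hexists : ∀ (Γ : Set V) (s' t' : V),
      (∀ a ∈ Γ, ∀ b ∈ Γ, ∃ p : G.Walk a b, ∀ x ∈ p.support, x ∈ Γ) →
      (∃ a ∈ Γ, G.Adj a s') → (∃ b ∈ Γ, G.Adj b t') →
      ∃ p : G.Walk s' t', (∀ x ∈ p.support, x = s' ∨ x = t' ∨ x ∈ Γ) ∧ p.IsPath ∧
        (∀ q : G.Walk s' t', (∀ x ∈ q.support, x = s' ∨ x = t' ∨ x ∈ Γ) →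
          p.length ≤ q.length) := by
    intro Γ s' t' hconn ⟨a, ha, has⟩ ⟨b, hb, hbt⟩
    obtain ⟨r, hr⟩ := hconn a ha b hb
    set N : Set ℕ := {n | ∃ p : G.Walk s' t',
        (∀ x ∈ p.support, x = s' ∨ x = t' ∨ x ∈ Γ) ∧ p.IsPath ∧ p.length = n} with hN
    have hmem : ∀ p : G.Walk s' t', (∀ x ∈ p.support, x = s' ∨ x = t' ∨ x ∈ Γ) →
        p.bypass.length ∈ N :=
      fun p hp => ⟨p.bypass, fun x hx => hp x (p.support_bypass_subset hx), p.bypass_isPath, rfl⟩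
    have hNne : N.Nonempty := by
      refine ⟨_, hmem (Walk.cons has.symm (r.append (Walk.cons hbt Walk.nil))) ?_⟩
      intro x hx
      rw [Walk.support_cons, List.mem_cons] at hx
      rcases hx with rfl | hx
      · exact Or.inl rfl
      · rw [Walk.mem_support_append_iff] at hx
        rcases hx with hx | hx
        · exact Or.inr (Or.inr (hr x hx))
        · simp only [Walk.support_cons, Walk.support_nil, List.mem_cons, List.mem_singleton,
            List.not_mem_nil, or_false] at hx
          rcases hx with rfl | rfl
          · exact Or.inr (Or.inr hb)
          · exact Or.inr (Or.inl rfl)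
    obtain ⟨p, hp1, hp2, hp3⟩ := Nat.sInf_mem hNne
    refine ⟨p, hp1, hp2, ?_⟩
    intro q hq
    have h1 := Nat.sInf_le (hmem q hq)
    have h2 := q.length_bypass_le
    omega
  obtain ⟨P₁, hP₁cond, hP₁path, hP₁min⟩ := hexists Γ₁ s t hconn1 (hfull1 s hs) (hfull1 t ht)
  obtain ⟨P₂, hP₂cond, hP₂path, hP₂min⟩ := hexists Γ₂ t s hconn2 (hfull2 t ht) (hfull2 s hs)
  -- basic facts
  have hchordless : ∀ {s' t' : V} (p : G.Walk s' t') (Γ : Set V),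
      (∀ x ∈ p.support, x = s' ∨ x = t' ∨ x ∈ Γ) →
      (∀ q : G.Walk s' t', (∀ x ∈ q.support, x = s' ∨ x = t' ∨ x ∈ Γ) → p.length ≤ q.length) →
      ∀ v w, v ∈ p.support → w ∈ p.support → G.Adj v w → s(v, w) ∈ p.edges := by
    intro s' t' p Γ hcond hmin v w hv hw hadj
    by_contra hne
    obtain ⟨q, hq1, hq2⟩ := shortcut p v w hv hw hadj hne
    exact absurd (hmin q (fun y hy => hcond y (hq1 y hy))) (by omega)
  have hP₁cl := hchordless P₁ Γ₁ hP₁cond hP₁min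
  have hP₂cl := hchordless P₂ Γ₂ hP₂cond hP₂min
  have hlen : ∀ {s' t' : V} (p : G.Walk s' t'), s' ≠ t' → ¬ G.Adj s' t' → 2 ≤ p.length := by
    intro s' t' p hne hna
    rcases Nat.lt_or_ge p.length 2 with h | h
    · interval_cases h' : p.length
      · exact absurd (Walk.eq_of_length_eq_zero h') hne
      · exact absurd (adj_of_length_one p h') hna
    · exact h
  have hl1 : 2 ≤ P₁.length := hlen P₁ hst hnadj
  have hl2 : 2 ≤ P₂.length := hlen P₂ (Ne.symm hst) (fun h => hnadj h.symm)
  -- build the cycle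
  have hint : ∀ x, x ∈ P₁.support → x ∈ P₂.support → x = s ∨ x = t := by
    intro x h1 h2
    rcases hP₁cond x h1 with rfl | rfl | h1'
    · exact Or.inl rfl
    · exact Or.inr rfl
    · rcases hP₂cond x h2 with rfl | rfl | h2'
      · exact Or.inr rfl
      · exact Or.inl rfl
      · exact absurd h2' (hdisj12 x h1')
  have hcyc : (P₁.append P₂).IsCycle := append_isCycle hP₁path hP₂path hst (by omega) hint
  obtain ⟨v, w, hv, hw, hadj, hne⟩ := hch (P₁.append P₂) hcyc (by rw [Walk.length_append]; omega)
  rw [Walk.mem_support_append_iff] at hv hw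
  have hedges : (P₁.append P₂).edges = P₁.edges ++ P₂.edges := Walk.edges_append _ _
  have hne1 : v ∈ P₁.support → w ∈ P₁.support → False := fun h1 h2 =>
    hne (by rw [hedges, List.mem_append]; exact Or.inl (hP₁cl v w h1 h2 hadj))
  have hne2 : v ∈ P₂.support → w ∈ P₂.support → False := fun h1 h2 =>
    hne (by rw [hedges, List.mem_append]; exact Or.inr (hP₂cl v w h1 h2 hadj))
  -- so one end is strictly inside Γ₁ and the other strictly inside Γ₂
  have hcross : ∀ y, y ∈ P₁.support ∨ y ∈ P₂.support → (y ∈ P₁.support ∧ y ∈ P₂.support) ∨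
      (y ∈ Γ₁ ∧ y ∈ P₁.support ∧ y ∉ P₂.support) ∨
      (y ∈ Γ₂ ∧ y ∈ P₂.support ∧ y ∉ P₁.support) := by
    intro y hy
    rcases hy with hy | hy
    · by_cases hy2 : y ∈ P₂.support
      · exact Or.inl ⟨hy, hy2⟩
      · rcases hP₁cond y hy with rfl | rfl | hyΓ
        · exact absurd P₂.end_mem_support hy2
        · exact absurd P₂.start_mem_support hy2
        · exact Or.inr (Or.inl ⟨hyΓ, hy, hy2⟩)
    · by_cases hy1 : y ∈ P₁.support
      · exact Or.inl ⟨hy1, hy⟩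
      · rcases hP₂cond y hy with rfl | rfl | hyΓ
        · exact absurd P₁.end_mem_support hy1
        · exact absurd P₁.start_mem_support hy1
        · exact Or.inr (Or.inr ⟨hyΓ, hy, hy1⟩)
  have hGamma : ∀ y z, y ∈ Γ₁ → z ∈ Γ₂ → G.Adj y z → False := by
    intro y z hy hz hadj'
    exact hdisj12 z (hclosed1 y hy z hadj' (hdisj2 z hz)) hz
  rcases hcross v hv with ⟨hv1, hv2⟩ | ⟨hvΓ, hv1, hv2⟩ | ⟨hvΓ, hv2, hv1⟩ <;>
    rcases hcross w hw with ⟨hw1, hw2⟩ | ⟨hwΓ, hw1, hw2⟩ | ⟨hwΓ, hw2, hw1⟩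
  · exact hne1 hv1 hw1
  · exact hne1 hv1 hw1
  · exact hne2 hv2 hw2
  · exact hne1 hv1 hw1
  · exact hne1 hv1 hw1
  · exact hGamma v w hvΓ hwΓ hadj
  · exact hne2 hv2 hw2
  · exact hGamma w v hwΓ hvΓ hadj.symm
  · exact hne2 hv2 hw2


lemma exists_maxClique_superset_s5 (s : Set V) (hs : G.IsClique s) :
    ∃ C : Set V, (G.IsClique C ∧ ∀ t : Set V, G.IsClique t → C ⊆ t → C = t) ∧ s ⊆ C := by
  obtain ⟨C, ⟨hC1, hC2⟩, hCmax⟩ := Set.Finite.exists_maximalFor id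
    {t : Set V | G.IsClique t ∧ s ⊆ t} (Set.toFinite _) ⟨s, hs, subset_rfl⟩
  refine ⟨C, ⟨hC1, ?_⟩, hC2⟩
  intro t ht hsub
  exact hsub.antisymm (hCmax ⟨ht, hC2.trans hsub⟩ hsub)

def ReachW (G : SimpleGraph V) (S : Set V) (u w : V) : Prop :=
  ∃ p : G.Walk u w, ∀ x ∈ p.support, x ∉ S

lemma full_aux {S : Set V} {u w s : V} :
    ∀ (a : V) (p : G.Walk a w), ¬ ReachW G S u w → (∀ x ∈ p.support, x ∈ S → x = s) →
      ReachW G S u a →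
      ∃ y, ReachW G S u y ∧ G.Adj y s := by
  intro a p
  induction p with
  | nil =>
    intro hnreach _ ha
    exact absurd ha hnreach
  | @cons a b w' h q ih =>
    intro hnreach hcond ha
    by_cases hbS : b ∈ S
    · have hbmem : b ∈ (Walk.cons h q).support := by
        rw [Walk.support_cons]
        exact List.mem_cons_of_mem _ q.start_mem_support
      exact ⟨a, ha, (hcond b hbmem hbS) ▸ h⟩
    · have hb : ReachW G S u b := by
        obtain ⟨r, hr⟩ := ha
        refine ⟨r.append (Walk.cons h Walk.nil), ?_⟩
        intro x hx
        rw [Walk.mem_support_append_iff] at hx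
        rcases hx with hx | hx
        · exact hr x hx
        · simp only [Walk.support_cons, Walk.support_nil, List.mem_cons, List.mem_singleton,
            List.not_mem_nil, or_false] at hx
          rcases hx with rfl | rfl
          · exact hr x r.end_mem_support
          · exact hbS
      exact ih hnreach (fun x hx hxS => hcond x (List.mem_cons_of_mem _ hx) hxS) hb








lemma key_lemma [DecidableEq V] (hch : IsChordal G) {S : Set V} (h : IsMinSeparator G S) :
    ∃ C C' : Set V, IsMaxClique G C ∧ IsMaxClique G C' ∧ S ⊂ C ∧ S ⊂ C' ∧ C ∩ C' ⊆ S := by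
  obtain ⟨-, u, w, ⟨-, -, huS, hwS, huw, hnreach⟩, hmin⟩ := h
  have hRW : ∀ a b : V, ReachWithin G Set.univ S a b ↔ ReachW G S a b := by
    intro a b
    constructor
    · rintro ⟨p, hp⟩; exact ⟨p, fun x hx => (hp x hx).2⟩
    · rintro ⟨p, hp⟩; exact ⟨p, fun x hx => ⟨trivial, hp x hx⟩⟩
  set Γu := {y | ReachW G S u y} with hΓu
  set Γw := {y | ReachW G S w y} with hΓw
  have hnreach' : ¬ ReachW G S u w := fun hr => hnreach ((hRW u w).mpr hr)
  have hrevreach : ∀ a b : V, ReachW G S a b → ReachW G S b a := by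
    rintro a b ⟨p, hp⟩
    exact ⟨p.reverse, fun x hx => hp x (by rwa [Walk.support_reverse, List.mem_reverse] at hx)⟩
  have hnreachw' : ¬ ReachW G S w u := fun hr => hnreach' (hrevreach w u hr)
  have hsupmem : ∀ (r y : V) (p : G.Walk r y), (∀ x ∈ p.support, x ∉ S) →
      ∀ x ∈ p.support, ReachW G S r x := by
    intro r y p hp x hx
    exact ⟨p.takeUntil x hx, fun z hz => hp z (p.support_takeUntil_subset hx hz)⟩
  have hprop : ∀ r : V, r ∉ S →
      (r ∈ {y | ReachW G S r y}) ∧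
      (∀ a ∈ {y | ReachW G S r y}, a ∉ S) ∧
      (∀ a ∈ {y | ReachW G S r y}, ∀ b, G.Adj a b → b ∉ S → b ∈ {y | ReachW G S r y}) ∧
      (∀ a ∈ {y | ReachW G S r y}, ∀ b ∈ {y | ReachW G S r y},
        ∃ p : G.Walk a b, ∀ x ∈ p.support, x ∈ {y | ReachW G S r y}) := by
    intro r hr
    refine ⟨⟨Walk.nil, by simp [hr]⟩, ?_, ?_, ?_⟩
    · rintro a ⟨p, hp⟩
      exact hp a p.end_mem_support
    · rintro a ⟨p, hp⟩ b hadj hbS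
      refine ⟨p.append (Walk.cons hadj Walk.nil), ?_⟩
      intro x hx
      rw [Walk.mem_support_append_iff] at hx
      rcases hx with hx | hx
      · exact hp x hx
      · simp only [Walk.support_cons, Walk.support_nil, List.mem_cons, List.mem_singleton,
          List.not_mem_nil, or_false] at hx
        rcases hx with rfl | rfl
        · exact hp x p.end_mem_support
        · exact hbS
    · rintro a ⟨p, hp⟩ b ⟨q, hq⟩
      refine ⟨p.reverse.append q, ?_⟩
      intro x hx
      rw [Walk.mem_support_append_iff] at hx
      rcases hx with hx | hx
      · rw [Walk.support_reverse, List.mem_reverse] at hx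
        exact hsupmem r a p hp x hx
      · exact hsupmem r b q hq x hx
  obtain ⟨huΓ, hdisjU, hclosedU, hconnU⟩ := hprop u huS
  obtain ⟨hwΓ, hdisjW, hclosedW, hconnW⟩ := hprop w hwS
  have hdisj12 : ∀ a ∈ Γu, a ∉ Γw := by
    rintro a ha haw
    obtain ⟨p, hp⟩ := ha
    obtain ⟨q, hq⟩ := haw
    refine hnreach' ⟨p.append q.reverse, ?_⟩
    intro x hx
    rw [Walk.mem_support_append_iff] at hx
    rcases hx with hx | hx
    · exact hp x hx
    · rw [Walk.support_reverse, List.mem_reverse] at hx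
      exact hq x hx
  -- fullness of both components
  have hwalkfrom : ∀ s ∈ S, ∃ p : G.Walk u w, ∀ x ∈ p.support, x ∈ S → x = s := by
    intro s hsS
    have hss : S \ {s} ⊂ S := Set.sdiff_singleton_ssubset.mpr hsS
    have hns := hmin _ hss
    have hreach : ReachWithin G Set.univ (S \ {s}) u w := by
      by_contra hnr
      exact hns ⟨trivial, trivial, fun h' => huS h'.1, fun h' => hwS h'.1, huw, hnr⟩
    obtain ⟨p, hp⟩ := hreach
    refine ⟨p, fun x hx hxS => ?_⟩
    by_contra hne
    exact (hp x hx).2 ⟨hxS, hne⟩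
  have hfullu : ∀ s ∈ S, ∃ a ∈ Γu, G.Adj a s := by
    intro s hsS
    obtain ⟨p, hp⟩ := hwalkfrom s hsS
    obtain ⟨y, hy, hadj⟩ := full_aux u p hnreach' hp ⟨Walk.nil, by simp [huS]⟩
    exact ⟨y, hy, hadj⟩
  have hfullw : ∀ s ∈ S, ∃ a ∈ Γw, G.Adj a s := by
    intro s hsS
    obtain ⟨p, hp⟩ := hwalkfrom s hsS
    obtain ⟨y, hy, hadj⟩ := full_aux w p.reverse hnreachw'
      (fun x hx hxS => hp x (by rwa [Walk.support_reverse, List.mem_reverse] at hx) hxS)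
      ⟨Walk.nil, by simp [hwS]⟩
    exact ⟨y, hy, hadj⟩
  -- S is a clique
  have hScl : G.IsClique S :=
    sep_clique hch S Γu Γw hdisjU hdisjW hdisj12 hclosedU hconnU hconnW hfullu hfullw
  -- vertices adjacent to all of S in both components
  obtain ⟨xu, hxuΓ, hxuadj⟩ := exists_adj_all hch S Γu hScl hdisjU ⟨u, huΓ⟩ hclosedU hconnU hfullu
  obtain ⟨xw, hxwΓ, hxwadj⟩ := exists_adj_all hch S Γw hScl hdisjW ⟨w, hwΓ⟩ hclosedW hconnW hfullw
  -- the two maximal cliques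
  have hclique : ∀ x : V, (∀ s ∈ S, G.Adj x s) → G.IsClique (insert x S) := by
    intro x hx a ha b hb hne
    rcases Set.mem_insert_iff.mp ha with rfl | ha2
    · rcases Set.mem_insert_iff.mp hb with rfl | hb2
      · exact absurd rfl hne
      · exact hx b hb2
    · rcases Set.mem_insert_iff.mp hb with heq2 | hb2
      · subst heq2
        exact (hx a ha2).symm
      · exact hScl ha2 hb2 hne
  obtain ⟨C, hC, hCsub⟩ := exists_maxClique_superset_s5 _ (hclique xu hxuadj)
  obtain ⟨C', hC', hC'sub⟩ := exists_maxClique_superset_s5 _ (hclique xw hxwadj)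
  have hSC : S ⊆ C := fun y hy => hCsub (Set.mem_insert_of_mem _ hy)
  have hSC' : S ⊆ C' := fun y hy => hC'sub (Set.mem_insert_of_mem _ hy)
  have hxuC : xu ∈ C := hCsub (Set.mem_insert _ _)
  have hxwC' : xw ∈ C' := hC'sub (Set.mem_insert _ _)
  have hcompsub : ∀ (D : Set V) (x : V) (Γ : Set V), IsMaxClique G D → x ∈ D → x ∈ Γ →
      (∀ a ∈ Γ, ∀ b, G.Adj a b → b ∉ S → b ∈ Γ) → ∀ y ∈ D, y ∉ S → y ∈ Γ := by
    intro D x Γ hD hxD hxΓ hcl y hy hyS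
    by_cases hyx : y = x
    · exact hyx ▸ hxΓ
    · exact hcl x hxΓ y (hD.1 hxD hy (Ne.symm hyx)) hyS
  refine ⟨C, C', hC, hC', ?_, ?_, ?_⟩
  · exact (Set.ssubset_iff_of_subset hSC).mpr ⟨xu, hxuC, hdisjU xu hxuΓ⟩
  · exact (Set.ssubset_iff_of_subset hSC').mpr ⟨xw, hxwC', hdisjW xw hxwΓ⟩
  · rintro y ⟨hy1, hy2⟩
    by_contra hyS
    exact hdisj12 y (hcompsub C xu Γu hC hxuC hxuΓ hclosedU y hy1 hyS)
      (hcompsub C' xw Γw hC' hxwC' hxwΓ hclosedW y hy2 hyS)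

end Aux

theorem maxcliques_above_separator_ne {V : Type*} [Fintype V]
    (G : SimpleGraph V) (hconn : G.Connected) (hch : IsChordal G)
    (S₁ S₂ : Set V) (h₁ : IsMinSeparator G S₁) (h₂ : IsMinSeparator G S₂)
    (hne : S₁ ≠ S₂) :
    {C : Set V | IsMaxClique G C ∧ S₁ ⊂ C} ≠ {C : Set V | IsMaxClique G C ∧ S₂ ⊂ C} := by
  classical
  intro heq
  obtain ⟨C, C', hC, hC', hSC, hSC', hint⟩ := key_lemma hch h₁
  obtain ⟨D, D', hD, hD', hSD, hSD', hint'⟩ := key_lemma hch h₂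
  apply hne
  apply Set.Subset.antisymm
  · have h1 : D ∈ {C : Set V | IsMaxClique G C ∧ S₁ ⊂ C} := by
      rw [heq]; exact ⟨hD, hSD⟩
    have h2 : D' ∈ {C : Set V | IsMaxClique G C ∧ S₁ ⊂ C} := by
      rw [heq]; exact ⟨hD', hSD'⟩
    exact fun x hx => hint' ⟨h1.2.subset hx, h2.2.subset hx⟩
  · have h1 : C ∈ {C : Set V | IsMaxClique G C ∧ S₂ ⊂ C} := by
      rw [← heq]; exact ⟨hC, hSC⟩
    have h2 : C' ∈ {C : Set V | IsMaxClique G C ∧ S₂ ⊂ C} := by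
      rw [← heq]; exact ⟨hC', hSC'⟩
    exact fun x hx => hint ⟨h1.2.subset hx, h2.2.subset hx⟩

end Chordal
end
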